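/- For every 0 ≤ j ≤ l−1, one has ∑_{k=0}^{j} (−q^{l−1})^{−k} (f_i^{(k)} ⊗ 1) · Δ(f_i^{(l−k)}) = K_i^l ⊗ f_i^{(l)} + ∑_{k=0}^{l−j−1} (−1)^j q^{−(j+k)(l−k)} [l−k−1 choose j]_q f_i^{(l−k)} K_i^k ⊗ f_i^{(k)}, where [a choose b]_q denotes the Gaussian binomial coefficient. -/

import Mathlib

namespace QuantumGL

noncomputable section

/-- The field `ℚ(q)` of rational functions. -/
abbrev Qq := FractionRing (Polynomial ℚ)

open scoped TensorProduct

variable (q : Qqˣ)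

/-- The balanced quantum integer `[l]_q = ∑_{i=0}^{l-1} q^{2i−l+1}`. -/
def qInt (l : ℕ) : Qq := ∑ i ∈ Finset.range l, ((q ^ (2 * (i : ℤ) - l + 1) : Qqˣ) : Qq)

/-- The quantum factorial `[l]_q!`. -/
def qFact (l : ℕ) : Qq := ∏ i ∈ Finset.range l, qInt q (i + 1)

/-- The Gaussian binomial coefficient `[a choose b]_q = [a]_q!/([b]_q! [a−b]_q!)`. -/
def qBinom (l k : ℕ) : Qq := qFact q l / (qFact q k * qFact q (l - k))

lemma exists_fieldHom : ∃ φ : Qq →+* ℝ, Function.Injective φ := by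
  have ht : Transcendental ℤ (liouvilleNumber 3) := transcendental_liouvilleNumber (by norm_num)
  have htq : Transcendental ℚ (liouvilleNumber 3) := fun h =>
    ht ((IsFractionRing.isAlgebraic_iff ℤ ℚ ℝ).mpr h)
  have hinj : Function.Injective
      ((Polynomial.aeval (liouvilleNumber 3) : Polynomial ℚ →ₐ[ℚ] ℝ) : Polynomial ℚ →+* ℝ) :=
    transcendental_iff_injective.mp htq
  exact ⟨IsFractionRing.lift hinj, RingHom.injective _⟩

lemma qInt_ne_zero (l : ℕ) (hl : 1 ≤ l) : qInt q l ≠ 0 := by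
  obtain ⟨φ, hφ⟩ := exists_fieldHom
  intro h
  have hq : (q : Qq) ≠ 0 := q.ne_zero
  have hs : φ (q : Qq) ≠ 0 := fun h0 => hq (hφ (by rw [h0, map_zero]))
  have key : φ (qInt q l) =
      (φ (q : Qq)) ^ (1 - (l : ℤ)) * ∑ i ∈ Finset.range l, ((φ (q : Qq)) ^ 2) ^ i := by
    rw [qInt, map_sum, Finset.mul_sum]
    refine Finset.sum_congr rfl fun i _ => ?_
    rw [Units.val_zpow_eq_zpow_val, map_zpow₀]
    rw [show (2 * (i : ℤ) - l + 1) = (1 - (l : ℤ)) + 2 * i by ring,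
      zpow_add₀ hs, zpow_mul, ← zpow_natCast]
    norm_num
  rw [h, map_zero] at key
  have hpos : (0 : ℝ) < ∑ i ∈ Finset.range l, ((φ (q : Qq)) ^ 2) ^ i := by
    refine Finset.sum_pos (fun i _ => pow_pos ?_ i) (by simp; omega)
    exact lt_of_le_of_ne (sq_nonneg _) (Ne.symm (pow_ne_zero 2 hs))
  exact (mul_ne_zero (zpow_ne_zero _ hs) hpos.ne') key.symm

lemma qFact_ne_zero (l : ℕ) : qFact q l ≠ 0 :=
  Finset.prod_ne_zero_iff.mpr fun i _ => qInt_ne_zero q (i + 1) (Nat.le_add_left 1 i)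

@[simp] lemma qFact_zero : qFact q 0 = 1 := by simp [qFact]

lemma qFact_succ (l : ℕ) : qFact q (l + 1) = qFact q l * qInt q (l + 1) := by
  rw [qFact, Finset.prod_range_succ]; rfl

@[simp] lemma qBinom_zero_right (n : ℕ) : qBinom q n 0 = 1 := by
  simp [qBinom, div_self (qFact_ne_zero q n)]

@[simp] lemma qBinom_self (n : ℕ) : qBinom q n n = 1 := by
  simp [qBinom, div_self (qFact_ne_zero q n)]

open scoped TensorProduct

lemma qInt_eq (l : ℕ) : qInt q l = ∑ i ∈ Finset.range l, (q : Qq) ^ (2 * (i : ℤ) - l + 1) := by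
  simp [qInt, Units.val_zpow_eq_zpow_val]

lemma qInt_add (a b : ℕ) : qInt q (a + b) =
    (q : Qq) ^ (-(b : ℤ)) * qInt q a + (q : Qq) ^ ((a : ℤ)) * qInt q b := by
  have hs : (q : Qq) ≠ 0 := q.ne_zero
  rw [qInt_eq, qInt_eq, qInt_eq, Finset.sum_range_add, Finset.mul_sum, Finset.mul_sum]
  congr 1
  · refine Finset.sum_congr rfl fun i _ => ?_
    rw [← zpow_add₀ hs]; congr 1; push_cast; ring
  · refine Finset.sum_congr rfl fun i _ => ?_
    rw [← zpow_add₀ hs]; congr 1; push_cast; ring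

lemma qBinom_pascal (n r : ℕ) (h : r < n) :
    qBinom q (n + 1) (r + 1) =
      (q : Qq) ^ (-(r : ℤ) - 1) * qBinom q n (r + 1) +
        (q : Qq) ^ ((n : ℤ) - (r : ℤ)) * qBinom q n r := by
  have hs : (q : Qq) ≠ 0 := q.ne_zero
  have h1 : (n + 1) - (r + 1) = n - r := by omega
  have h2 : n - (r + 1) = (n - r) - 1 := by omega
  have key : qInt q (n + 1) =
      (q : Qq) ^ (-(r : ℤ) - 1) * qInt q (n - r) +
        (q : Qq) ^ ((n : ℤ) - (r : ℤ)) * qInt q (r + 1) := by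
    have h4 := qInt_add q (n - r) (r + 1)
    rw [show n - r + (r + 1) = n + 1 by omega] at h4
    rw [h4]
    congr 2
    · congr 1; push_cast; ring
    · congr 1; omega
  have h3 : n - r = (n - r - 1) + 1 := by omega
  rw [qBinom, qBinom, qBinom, h1, h2, qFact_succ q n, key, h3, qFact_succ q (n - r - 1),
    qFact_succ q r]
  simp only [Nat.add_sub_cancel]
  have A := qFact_ne_zero q n
  have B := qFact_ne_zero q r
  have C := qFact_ne_zero q (n - r - 1)
  have D := qInt_ne_zero q (r + 1) (by omega)
  have E := qInt_ne_zero q (n - r - 1 + 1) (by omega)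
  field_simp

lemma coef_combine (s B1 B2 : Qq) (hs : s ≠ 0) (j : ℕ) (a b c d e f : ℤ)
    (h1 : b + c + d = f) (h2 : b + c + e = a) :
    (-1:Qq)^j * s^a * B1 + (-1:Qq)^(j+1) * s^b * s^c * (s^d * B2 + s^e * B1)
      = (-1:Qq)^(j+1) * s^f * B2 := by
  subst h1 h2
  simp only [pow_succ, zpow_add₀ hs]
  ring

lemma coef_top (s : Qq) (hs : s ≠ 0) (j : ℕ) (a b c : ℤ) (h : b + c = a) :
    (-1:Qq)^j * s^a * 1 + (-1:Qq)^(j+1) * s^b * s^c * 1 = 0 := by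
  subst h
  simp only [pow_succ, zpow_add₀ hs]
  ring


variable {A : Type*} [Ring A] [Algebra Qq A]
  (F : ℕ → A) (K : Aˣ)

/-- The explicit formula for
`Δ(f_i^{(l)}) = ∑_{k=0}^{l} q^{−k(l−k)} f_i^{(l−k)} K_i^k ⊗ f_i^{(k)}`,
where `F l = f_i^{(l)}` and `K = K_i`. -/
def comulF (l : ℕ) : A ⊗[Qq] A :=
  ∑ k ∈ Finset.range (l + 1),
    ((q ^ (-((k : ℤ) * ((l : ℤ) - (k : ℤ)))) : Qqˣ) : Qq) •
      ((F (l - k) * (K : A) ^ k) ⊗ₜ[Qq] F k)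

/-- in `U_q(gl_n)` (abstracted as any `ℚ(q)`-algebra `A` containing the divided
powers `F l = f_i^{(l)}` and the invertible `K = K_i`, with the defining identities below),
for all `0 ≤ j ≤ l − 1`:
`∑_{k=0}^{j} (−q^{l−1})^{−k} (f_i^{(k)} ⊗ 1) · Δ(f_i^{(l−k)})
  = K_i^l ⊗ f_i^{(l)}
    + ∑_{k=0}^{l−j−1} (−1)^j q^{−(j+k)(l−k)} [l−k−1 choose j]_q f_i^{(l−k)} K_i^k ⊗ f_i^{(k)}`. -/
theorem divided_power_f_partial_sums
    (hF0 : F 0 = 1)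
    (hFmul : ∀ k l : ℕ, F k * F l = qBinom q (k + l) k • F (k + l))
    (hKF : ∀ l : ℕ, (K : A) * F l = ((q ^ (-(2 * (l : ℤ))) : Qqˣ) : Qq) • (F l * (K : A)))
    (l : ℕ) (hl : 1 ≤ l) (j : ℕ) (hj : j ≤ l - 1) :
    ∑ k ∈ Finset.range (j + 1),
        ((-1 : Qq) ^ k * ((q ^ (-((k : ℤ) * ((l : ℤ) - 1))) : Qqˣ) : Qq)) •
          ((F k ⊗ₜ[Qq] (1 : A)) * comulF q F K (l - k)) =
      ((K : A) ^ l) ⊗ₜ[Qq] F l +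
        ∑ k ∈ Finset.range (l - j),
          ((-1 : Qq) ^ j *
              ((q ^ (-(((j : ℤ) + (k : ℤ)) * ((l : ℤ) - (k : ℤ)))) : Qqˣ) : Qq) *
              qBinom q (l - k - 1) j) •
            ((F (l - k) * (K : A) ^ k) ⊗ₜ[Qq] F k) := by
  have hs : (q : Qq) ≠ 0 := q.ne_zero
  simp only [Units.val_zpow_eq_zpow_val]
  induction j with
  | zero =>
    rw [Finset.sum_range_one]
    simp only [pow_zero, Nat.cast_zero, zero_mul, neg_zero, zpow_zero, one_mul, one_smul,
      Nat.sub_zero, hF0, qBinom_zero_right, mul_one, zero_add]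
    rw [← Algebra.TensorProduct.one_def, one_mul, comulF, Finset.sum_range_succ]
    simp only [Units.val_zpow_eq_zpow_val, Nat.sub_self, hF0, one_mul]
    rw [show (-((l:ℤ) * ((l:ℤ) - (l:ℤ)))) = 0 by ring, zpow_zero, one_smul, add_comm]
  | succ j ih =>
    have hj' : j ≤ l - 1 := by omega
    rw [Finset.sum_range_succ, ih hj', add_assoc]
    congr 1
    rw [comulF, Finset.mul_sum, Finset.smul_sum,
      show l - j = l - (j+1) + 1 by omega, ← Finset.sum_add_distrib,
      Finset.sum_range_succ]
    have main : ∀ x ∈ Finset.range (l - (j + 1)),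
        ((-1:Qq) ^ j * (q:Qq) ^ (-(((j:ℤ) + (x:ℤ)) * ((l:ℤ) - (x:ℤ)))) * qBinom q (l - x - 1) j) •
            ((F (l - x) * (K:A) ^ x) ⊗ₜ[Qq] F x) +
          ((-1:Qq) ^ (j + 1) * (q:Qq) ^ (-(((j + 1 : ℕ):ℤ) * ((l:ℤ) - 1)))) •
            ((F (j + 1) ⊗ₜ[Qq] (1:A)) *
              ((q ^ (-((x:ℤ) * (((l - (j + 1) : ℕ):ℤ) - (x:ℤ)))) : Qqˣ) : Qq) •
                ((F (l - (j + 1) - x) * (K:A) ^ x) ⊗ₜ[Qq] F x)) =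
        ((-1:Qq) ^ (j + 1) * (q:Qq) ^ (-((((j + 1 : ℕ):ℤ) + (x:ℤ)) * ((l:ℤ) - (x:ℤ)))) *
            qBinom q (l - x - 1) (j + 1)) •
          ((F (l - x) * (K:A) ^ x) ⊗ₜ[Qq] F x) := by
      intro x hx
      have hx' : x < l - (j + 1) := Finset.mem_range.mp hx
      rw [Units.val_zpow_eq_zpow_val, mul_smul_comm, smul_smul,
        Algebra.TensorProduct.tmul_mul_tmul, one_mul, ← mul_assoc (F (j + 1)),
        hFmul (j + 1) (l - (j + 1) - x),
        show (j + 1) + (l - (j + 1) - x) = l - x by omega,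
        smul_mul_assoc, ← TensorProduct.smul_tmul', smul_smul, ← add_smul]
      congr 1
      have hp := qBinom_pascal q (l - x - 1) j (by omega)
      rw [show l - x - 1 + 1 = l - x by omega] at hp
      rw [hp, show ((l - (j + 1) : ℕ) : ℤ) = (l:ℤ) - ((j:ℤ) + 1) by omega,
        show ((l - x - 1 : ℕ) : ℤ) = (l:ℤ) - (x:ℤ) - 1 by omega]
      push_cast
      exact coef_combine (q:Qq) _ _ hs j _ _ _ _ _ _ (by ring) (by ring)
    have top :
        ((-1:Qq) ^ j *
              (q:Qq) ^ (-(((j:ℤ) + ((l - (j + 1) : ℕ):ℤ)) * ((l:ℤ) - ((l - (j + 1) : ℕ):ℤ)))) *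
              qBinom q (l - (l - (j + 1)) - 1) j) •
            ((F (l - (l - (j + 1))) * (K:A) ^ (l - (j + 1))) ⊗ₜ[Qq] F (l - (j + 1))) +
          ((-1:Qq) ^ (j + 1) * (q:Qq) ^ (-(((j + 1 : ℕ):ℤ) * ((l:ℤ) - 1)))) •
            ((F (j + 1) ⊗ₜ[Qq] (1:A)) *
              ((q ^ (-(((l - (j + 1) : ℕ):ℤ) *
                  (((l - (j + 1) : ℕ):ℤ) - ((l - (j + 1) : ℕ):ℤ)))) : Qqˣ) : Qq) •
                ((F (l - (j + 1) - (l - (j + 1))) * (K:A) ^ (l - (j + 1))) ⊗ₜ[Qq]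
                  F (l - (j + 1)))) = 0 := by
      rw [Units.val_zpow_eq_zpow_val, mul_smul_comm, smul_smul,
        Algebra.TensorProduct.tmul_mul_tmul, one_mul, ← mul_assoc (F (j + 1)),
        hFmul (j + 1) (l - (j + 1) - (l - (j + 1))),
        show (j + 1) + (l - (j + 1) - (l - (j + 1))) = l - (l - (j + 1)) by omega,
        smul_mul_assoc, ← TensorProduct.smul_tmul', smul_smul, ← add_smul]
      refine smul_eq_zero_of_left ?_ _
      rw [show l - (l - (j + 1)) - 1 = j by omega, show l - (l - (j + 1)) = j + 1 by omega,
        qBinom_self, qBinom_self,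
        show ((l - (j + 1) : ℕ) : ℤ) = (l:ℤ) - ((j:ℤ) + 1) by omega]
      push_cast
      exact coef_top (q:Qq) hs j _ _ _ (by ring)
    exact (congrArg₂ (· + ·) (Finset.sum_congr rfl main) top).trans (add_zero _)

end

end QuantumGL
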